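/- arXiv:2206.01582 — 4 statements merged into one kernel-verified Lean document; each statement's English description precedes it below -/
import Mathlib

section
/- Let Γ and G be groups, and let H be a subgroup of the wreath product Γ ≀ G = Γ^G ⋊ G (where G acts on functions f : G → Γ by (f^h)(g) = f(hg)). Suppose the projection of H to G is all of G, and that for some g ∈ G with g ≠ 1, the subgroup H ∩ Γ^G surjects onto Γ × Γ under the map f ↦ (f(1), f(g)). Then for every subgroup N of Γ ≀ G containing the commutator subgroup [H, H], the intersection N ∩ Γ^G surjects onto Γ under the evaluation map f ↦ f(1). -/
/-!
Statement 0: Let Γ and G be groups, and let H ≤ Γ ≀ G = Γ^G ⋊ G (G acting on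
functions f : G → Γ by (f^h)(g) = f (h * g); as a left action, (h • f) g = f (h⁻¹ * g)).
If the projection of H to G is all of G, and for some g ≠ 1 the subgroup H ∩ Γ^G
surjects onto Γ × Γ under f ↦ (f 1, f g), then for every subgroup N containing the
commutator subgroup [H, H], the intersection N ∩ Γ^G surjects onto Γ under f ↦ f 1.
-/

/-- The action of `G` on `G → Γ` by right translation of the argument:
`(h • f) g = f (h⁻¹ * g)`, i.e. `f ^ h = h⁻¹ • f` where `(f ^ h) g = f (h * g)`. -/
def wreathAction (Γ G : Type*) [Group Γ] [Group G] : G →* MulAut (G → Γ) where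
  toFun h :=
    { toFun := fun f g => f (h⁻¹ * g)
      invFun := fun f g => f (h * g)
      left_inv := fun f => by funext g; simp [mul_assoc]
      right_inv := fun f => by funext g; simp [mul_assoc]
      map_mul' := fun f₁ f₂ => rfl }
  map_one' := by ext f g; simp
  map_mul' h₁ h₂ := by ext f g; simp [mul_assoc]

/-- The wreath product `Γ ≀ G`. -/
abbrev WreathProduct (Γ G : Type*) [Group Γ] [Group G] :=
  (G → Γ) ⋊[wreathAction Γ G] G

theorem stmt_0 {Γ G : Type*} [Group Γ] [Group G]
    (H : Subgroup (WreathProduct Γ G))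
    (hpr : ∀ g : G, ∃ x ∈ H, SemidirectProduct.rightHom x = g)
    (g : G) (hg : g ≠ 1)
    (hsurj : ∀ γ₁ γ₂ : Γ, ∃ f : G → Γ,
      SemidirectProduct.inl f ∈ H ∧ f 1 = γ₁ ∧ f g = γ₂)
    (N : Subgroup (WreathProduct Γ G)) (hN : ⁅H, H⁆ ≤ N) :
    ∀ γ : Γ, ∃ f : G → Γ, SemidirectProduct.inl f ∈ N ∧ f 1 = γ := by
  intro γ
  obtain ⟨x, hxH, hxg⟩ := hpr g⁻¹
  obtain ⟨f, hfH, hf1, hfg⟩ := hsurj γ 1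
  open scoped commutatorElement in set c := ⁅(SemidirectProduct.inl f : WreathProduct Γ G), x⁆ with hc
  have hcN : c ∈ N := hN (Subgroup.commutator_mem_commutator hfH hxH)
  have hcr : c.right = 1 := by
    simp [hc, commutatorElement_def, SemidirectProduct.mul_right,
      SemidirectProduct.inv_right, ← SemidirectProduct.rightHom_eq_right, hxg]
  refine ⟨c.left, ?_, ?_⟩
  · have : SemidirectProduct.inl c.left = c := by
      ext
      · simp
      · simp [hcr]
    rwa [this]
  · have hxr : x.right = g⁻¹ := hxg
    have : c.left 1 = γ := by
      rw [hc, commutatorElement_def]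
      simp only [SemidirectProduct.mul_left, SemidirectProduct.inv_left, SemidirectProduct.left_inl, SemidirectProduct.right_inl, SemidirectProduct.mul_right, SemidirectProduct.inv_right]
      simp [wreathAction, hf1, hfg, hxr]
    exact this
end

section
/- Let G₁, G₂, Γ be groups with G₁ and G₂ nontrivial, and set G = G₁ × G₂. Suppose the canonical projection pr : Γ ≀ G → G factors as a composition of surjective group homomorphisms p : Γ ≀ G → H and r : H → G. Let H₁, H₂ be normal subgroups of H with r(H₁) = G₁ × {1}, r(H₂) = {1} × G₂, and such that H₁ and H₂ commute elementwise ([H₁, H₂] = 1). Then the kernel of p, which is contained in Γ^G, surjects onto Γ under the evaluation map f ↦ f(1). -/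
lemma wreathAction_apply {Γ G : Type*} [Group Γ] [Group G] (h : G) (f : G → Γ) (g : G) :
    wreathAction Γ G h f g = f (h⁻¹ * g) := rfl

lemma wreathAction_inv_apply {Γ G : Type*} [Group Γ] [Group G] (h : G) (f : G → Γ) (g : G) :
    (wreathAction Γ G h)⁻¹ f g = f (h * g) := rfl

open scoped commutatorElement

theorem stmt_1 {Γ G₁ G₂ H : Type*} [Group Γ] [Group G₁] [Group G₂] [Group H]
    [Nontrivial G₁] [Nontrivial G₂]
    (p : WreathProduct Γ (G₁ × G₂) →* H) (hp : Function.Surjective p)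
    (r : H →* G₁ × G₂) (hr : Function.Surjective r)
    (hfactor : r.comp p = SemidirectProduct.rightHom)
    (H₁ H₂ : Subgroup H) (hH₁ : H₁.Normal) (hH₂ : H₂.Normal)
    (hrH₁ : H₁.map r = (⊤ : Subgroup G₁).prod (⊥ : Subgroup G₂))
    (hrH₂ : H₂.map r = (⊥ : Subgroup G₁).prod (⊤ : Subgroup G₂))
    (hcomm : ⁅H₁, H₂⁆ = (⊥ : Subgroup H)) :
    ∀ γ : Γ, ∃ f : G₁ × G₂ → Γ, SemidirectProduct.inl f ∈ p.ker ∧ f 1 = γ := by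
  classical
  intro γ
  obtain ⟨g₁, hg₁⟩ := exists_ne (1 : G₁)
  obtain ⟨g₂, hg₂⟩ := exists_ne (1 : G₂)
  have hm₁ : ((g₁, 1) : G₁ × G₂) ∈ H₁.map r := by
    rw [hrH₁]; exact Subgroup.mem_prod.2 ⟨Subgroup.mem_top _, Subgroup.mem_bot.2 rfl⟩
  have hm₂ : ((1, g₂) : G₁ × G₂) ∈ H₂.map r := by
    rw [hrH₂]; exact Subgroup.mem_prod.2 ⟨Subgroup.mem_bot.2 rfl, Subgroup.mem_top _⟩
  obtain ⟨h₁, hh₁, hrh₁⟩ := hm₁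
  obtain ⟨h₂, hh₂, hrh₂⟩ := hm₂
  obtain ⟨w₁, hw₁⟩ := hp h₁
  obtain ⟨w₂, hw₂⟩ := hp h₂
  have hpr : ∀ w : WreathProduct Γ (G₁ × G₂), r (p w) = w.right := by
    intro w
    have := DFunLike.congr_fun hfactor w
    simpa using this
  have hs : w₁.right = (g₁, 1) := by rw [← hpr w₁, hw₁, hrh₁]
  have ht : w₂.right = (1, g₂) := by rw [← hpr w₂, hw₂, hrh₂]
  set s : G₁ × G₂ := (g₁, 1) with hs_def
  set t : G₁ × G₂ := (1, g₂) with ht_def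
  -- choose the function a
  set δ : Γ := γ * w₂.left 1 * w₁.left t⁻¹ * (w₂.left s⁻¹)⁻¹ * (w₁.left 1)⁻¹ with hδ
  set a : G₁ × G₂ → Γ := Pi.mulSingle 1 δ with ha
  set u : WreathProduct Γ (G₁ × G₂) := SemidirectProduct.inl a with hu
  set c : WreathProduct Γ (G₁ × G₂) := ⁅u * w₁ * u⁻¹, w₂⁆ with hc
  -- c has trivial right component
  have hcr : c.right = 1 := by
    have hst : Commute s t := by
      simp [Commute, SemiconjBy, hs_def, ht_def, Prod.ext_iff]
    have : c.right = ⁅(u * w₁ * u⁻¹).right, w₂.right⁆ := by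
      simp [hc, commutatorElement_def]
    rw [this]
    simp [hu, hs, ht]
    rw [commutatorElement_eq_one_iff_commute]
    exact hst
  refine ⟨c.left, ?_, ?_⟩
  · have hmem : p c = 1 := by
      have h1 : p u * h₁ * (p u)⁻¹ ∈ H₁ := hH₁.conj_mem h₁ hh₁ (p u)
      have : ⁅p u * h₁ * (p u)⁻¹, h₂⁆ ∈ ⁅H₁, H₂⁆ :=
        Subgroup.commutator_mem_commutator h1 hh₂
      rw [hcomm, Subgroup.mem_bot] at this
      calc p c = ⁅p u * p w₁ * (p u)⁻¹, p w₂⁆ := by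
            simp [hc, commutatorElement_def]
        _ = 1 := by rw [hw₁, hw₂]; exact this
    have : SemidirectProduct.inl c.left = c := by
      ext <;> simp [hcr]
    rw [MonoidHom.mem_ker, this, hmem]
  · -- compute c.left 1
    have hsne : s ≠ 1 := by simp [hs_def, Prod.ext_iff, hg₁]
    have htne : t ≠ 1 := by simp [ht_def, Prod.ext_iff, hg₂]
    have h1s : (1 : G₁ × G₂) ≠ s⁻¹ := by
      intro h; exact hsne (by rw [← inv_inv s, ← h, inv_one])
    have h1t : (1 : G₁ × G₂) ≠ t⁻¹ := by
      intro h; exact htne (by rw [← inv_inv t, ← h, inv_one])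
    have h1st : (1 : G₁ × G₂) ≠ s⁻¹ * t⁻¹ := by
      simp [hs_def, ht_def, Prod.ext_iff]
      exact fun h => absurd h hg₁
    simp only [hc, commutatorElement_def, SemidirectProduct.mul_left,
      SemidirectProduct.inv_left, SemidirectProduct.mul_right,
      SemidirectProduct.inv_right, hu, SemidirectProduct.left_inl,
      SemidirectProduct.right_inl, map_one, map_inv, map_mul,
      Pi.mul_apply, Pi.inv_apply, MulAut.mul_apply, wreathAction_apply,
      wreathAction_inv_apply, hs, ht]
    simp only [ha, one_mul, mul_one, inv_one, Pi.mulSingle_eq_same,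
      MulAut.one_apply, Pi.mul_apply, Pi.inv_apply, MulAut.mul_apply,
      wreathAction_apply, wreathAction_inv_apply]
    have n1 : ((g₁⁻¹, 1) : G₁ × G₂) ≠ 1 := by simp [Prod.ext_iff, hg₁]
    have n2 : ((1, g₂⁻¹) : G₁ × G₂) ≠ 1 := by simp [Prod.ext_iff, hg₂]
    have n3 : ((g₁⁻¹, g₂⁻¹) : G₁ × G₂) ≠ 1 := by simp [Prod.ext_iff, hg₁]
    have e1 : Pi.mulSingle (M := fun _ : G₁ × G₂ => Γ) 1 δ (g₁⁻¹, 1) = 1 :=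
      Pi.mulSingle_eq_of_ne (M := fun _ : G₁ × G₂ => Γ) n1 δ
    have e2 : Pi.mulSingle (M := fun _ : G₁ × G₂ => Γ) 1 δ (1, g₂⁻¹) = 1 :=
      Pi.mulSingle_eq_of_ne (M := fun _ : G₁ × G₂ => Γ) n2 δ
    have e3 : Pi.mulSingle (M := fun _ : G₁ × G₂ => Γ) 1 δ (g₁⁻¹, g₂⁻¹) = 1 :=
      Pi.mulSingle_eq_of_ne (M := fun _ : G₁ × G₂ => Γ) n3 δ
    simp only [Pi.mulSingle_apply, hs_def, ht_def, Prod.mk_mul_mk, Prod.inv_mk,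
      mul_one, one_mul, inv_one, mul_inv_cancel, inv_mul_cancel, Prod.mk_eq_one,
      inv_eq_one, hg₁, hg₂, false_and, and_false, and_true, true_and, and_self,
      if_false, if_true, ite_false, ite_true]
    rw [hδ]
    simp only [hs_def, ht_def, Prod.inv_mk, inv_one, Prod.mk_one_one]
    group
end

section
/- Let K be a field and let M₁, …, M_r be Galois extensions of K (inside a fixed algebraic closure) such that for every i, M_i is not contained in the compositum M₁⋯M_{i−1}. Then there exists an element σ of the Galois group Gal(M₁⋯M_r/K) such that the restriction of σ to M_i is nontrivial for every i = 1, …, r. -/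
open Polynomial IntermediateField

/-- If `L/K` is Galois and `x ∉ N` for an intermediate field `N`, there is a `K`-automorphism
of `L` fixing `N` pointwise and moving `x`. -/
lemma aux_move_stmt2 {K L : Type*} [Field K] [Field L] [Algebra K L] [IsGalois K L]
    (N : IntermediateField K L) {x : L} (hx : x ∉ N) :
    ∃ τ : L ≃ₐ[K] L, (∀ y ∈ N, τ y = y) ∧ τ x ≠ x := by
  classical
  have hint : IsIntegral N x := Algebra.IsIntegral.isIntegral x
  have hdeg : 2 ≤ (minpoly N x).natDegree := by
    rw [minpoly.two_le_natDegree_iff hint]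
    rintro ⟨y, rfl⟩
    exact hx y.2
  set q := (minpoly N x).map (algebraMap N L) with hq
  have hsplit : ((minpoly N x).map (algebraMap N L)).Splits := Normal.splits inferInstance x
  have hcard : q.roots.card = (minpoly N x).natDegree :=
    by rw [← hsplit.natDegree_eq_card_roots]; exact Polynomial.natDegree_map _
  have hnodup : q.roots.Nodup :=
    Polynomial.nodup_roots (Polynomial.Separable.map (Algebra.IsSeparable.isSeparable N x))
  have hq0 : q ≠ 0 := by
    simpa [hq, Polynomial.map_eq_zero] using minpoly.ne_zero hint
  have hxroot : x ∈ q.roots := by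
    rw [Polynomial.mem_roots hq0]
    simpa [hq, Polynomial.IsRoot, Polynomial.eval_map, ← Polynomial.aeval_def]
      using minpoly.aeval N x
  have hcard' : 1 ≤ (q.roots.erase x).card := by
    rw [Multiset.card_erase_of_mem hxroot]
    exact Nat.le_pred_of_lt (by omega)
  obtain ⟨y, hy⟩ := Multiset.card_pos_iff_exists_mem.mp hcard'
  have hyx : y ≠ x := (hnodup.mem_erase_iff.mp hy).1
  have hyroot : y ∈ q.roots := (hnodup.mem_erase_iff.mp hy).2
  have h_ev : (Polynomial.aeval y) (minpoly N x) = 0 := by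
    have := (Polynomial.mem_roots hq0).mp hyroot
    simpa [hq, Polynomial.IsRoot, Polynomial.eval_map, ← Polynomial.aeval_def] using this
  obtain ⟨σ, hσ⟩ := minpoly.exists_algEquiv_of_root' (hint.isAlgebraic) h_ev
  refine ⟨σ.restrictScalars K, ?_, ?_⟩
  · intro z hz
    have : σ (algebraMap N L ⟨z, hz⟩) = algebraMap N L ⟨z, hz⟩ := σ.commutes _
    simpa using this
  · show σ x ≠ x
    rw [hσ]
    exact hyx

theorem stmt_2 {K L : Type*} [Field K] [Field L] [Algebra K L] [IsGalois K L]
    (r : ℕ) (M : Fin r → IntermediateField K L)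
    (hGal : ∀ i, IsGalois K (M i))
    (hnotle : ∀ i, ¬ M i ≤ ⨆ j : Fin r, ⨆ _ : j < i, M j) :
    ∃ σ : (⨆ i, M i : IntermediateField K L) ≃ₐ[K] (⨆ i, M i : IntermediateField K L),
      ∀ i, ∃ x : (⨆ i, M i : IntermediateField K L), (x : L) ∈ M i ∧ σ x ≠ x := by
  haveI : ∀ i, Normal K (M i) := fun i => (hGal i).to_normal
  -- Build σ on all of L by induction.
  have key : ∀ n : ℕ, n ≤ r →
      ∃ σ : L ≃ₐ[K] L, ∀ j : Fin r, (j : ℕ) < n → ∃ x ∈ M j, σ x ≠ x := by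
    intro n
    induction n with
    | zero => exact fun _ => ⟨1, fun j h => absurd h (Nat.not_lt_zero _)⟩
    | succ n ih =>
      intro hn
      obtain ⟨σ, hσ⟩ := ih (Nat.le_of_succ_le hn)
      set i : Fin r := ⟨n, hn⟩ with hidef
      have hcase : ∀ τ : L ≃ₐ[K] L, (∃ x ∈ M i, τ x ≠ x) →
          (∀ j : Fin r, (j : ℕ) < n → ∃ x ∈ M j, τ x ≠ x) →
          ∀ j : Fin r, (j : ℕ) < n + 1 → ∃ x ∈ M j, τ x ≠ x := by
        intro τ hi hlt j hj
        rcases Nat.lt_succ_iff_lt_or_eq.mp hj with h | h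
        · exact hlt j h
        · have : j = i := Fin.ext h
          rw [this]; exact hi
      by_cases hfix : ∃ x ∈ M i, σ x ≠ x
      · exact ⟨σ, hcase σ hfix hσ⟩
      · push_neg at hfix
        set N : IntermediateField K L := ⨆ j : Fin r, ⨆ _ : j < i, M j with hN
        obtain ⟨x, hxM, hxN⟩ := SetLike.not_le_iff_exists.mp (hnotle i)
        obtain ⟨τ, hτfix, hτx⟩ := aux_move_stmt2 N hxN
        refine ⟨τ.trans σ, hcase _ ?_ ?_⟩
        · -- on M i : τ x ∈ M i by normality, σ fixes it, so (σ ∘ τ) x = τ x ≠ x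
          have hτMi : τ x ∈ M i := by
            have h := AlgEquiv.restrictNormal_commutes τ (M i) ⟨x, hxM⟩
            have : ((τ.restrictNormal (M i)) ⟨x, hxM⟩ : L) = τ x := h
            exact this ▸ ((τ.restrictNormal (M i)) ⟨x, hxM⟩).2
          refine ⟨x, hxM, ?_⟩
          show σ (τ x) ≠ x
          rw [hfix (τ x) hτMi]
          exact hτx
        · -- on M j for j < n : τ fixes M j ≤ N
          intro j hj
          obtain ⟨z, hzM, hz⟩ := hσ j hj
          have hjN : M j ≤ N := by
            refine le_trans ?_ (le_iSup _ j)
            exact le_iSup (fun _ : j < i => M j) (by rwa [Fin.lt_def])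
          refine ⟨z, hzM, ?_⟩
          show σ (τ z) ≠ z
          rw [hτfix z (hjN hzM)]
          exact hz
  obtain ⟨σ, hσ⟩ := key r le_rfl
  refine ⟨σ.restrictNormal (⨆ i, M i : IntermediateField K L), ?_⟩
  intro i
  obtain ⟨x, hxM, hx⟩ := hσ i i.2
  have hxE : x ∈ (⨆ i, M i : IntermediateField K L) := le_iSup M i hxM
  refine ⟨⟨x, hxE⟩, hxM, ?_⟩
  intro h
  apply hx
  have hcomm := AlgEquiv.restrictNormal_commutes σ
    (⨆ i, M i : IntermediateField K L) ⟨x, hxE⟩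
  calc σ x = ((σ.restrictNormal (⨆ i, M i : IntermediateField K L)) ⟨x, hxE⟩ : L) :=
        hcomm.symm
    _ = ((⟨x, hxE⟩ : (⨆ i, M i : IntermediateField K L)) : L) := by rw [h]
    _ = x := rfl
end

section
/- For every polynomial f with integer coefficients which is not a square in ℂ[X], there exists a finite set P_f of prime numbers such that: for every finite set P of primes, there are infinitely many integers x with (a) p does not divide f(x) for every prime p in P \ P_f, and (b) the p-adic valuation v_p(f(x)) is odd for some prime p not in P. -/
open Polynomial

theorem my_sq_mul_squarefree {K : Type*} [Field K] (f : K[X]) (hf : f ≠ 0) :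
    ∃ s h : K[X], Squarefree h ∧ f = s ^ 2 * h := by
  suffices H : ∀ (n : ℕ) (f : K[X]), f ≠ 0 → f.natDegree = n →
      ∃ s h : K[X], Squarefree h ∧ f = s ^ 2 * h from H f.natDegree f hf rfl
  intro n
  induction n using Nat.strong_induction_on with
  | _ n ih =>
  intro f hf hn
  by_cases hsq : Squarefree f
  · exact ⟨1, f, hsq, by ring⟩
  · rw [Squarefree] at hsq
    push_neg at hsq
    obtain ⟨x, hdvd, hxu⟩ := hsq
    obtain ⟨f₁, hf₁⟩ := hdvd
    have hx0 : x ≠ 0 := by rintro rfl; simp at hf₁; exact hf hf₁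
    have hf₁0 : f₁ ≠ 0 := by rintro rfl; simp at hf₁; exact hf hf₁
    have hxdeg : 0 < x.natDegree := by
      rcases Nat.eq_zero_or_pos x.natDegree with h0 | h
      · exfalso
        apply hxu
        have hc : x.coeff 0 ≠ 0 := fun hc => hx0 (by
          rw [Polynomial.eq_C_of_natDegree_eq_zero h0, hc, map_zero])
        rw [Polynomial.eq_C_of_natDegree_eq_zero h0]
        exact isUnit_C.mpr (isUnit_iff_ne_zero.mpr hc)
      · exact h
    have hdeg : f₁.natDegree < n := by
      have h2 := hn
      rw [hf₁, Polynomial.natDegree_mul (mul_ne_zero hx0 hx0) hf₁0,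
        Polynomial.natDegree_mul hx0 hx0] at h2
      omega
    obtain ⟨s, h, hh, hs⟩ := ih f₁.natDegree hdeg f₁ hf₁0 rfl
    exact ⟨x * s, h, hh, by rw [hf₁, hs]; ring⟩

theorem my_exists_eval_ne_zero (g : Polynomial ℤ) (hg : g ≠ 0) : ∃ x : ℤ, g.eval x ≠ 0 := by
  by_contra h
  push_neg at h
  exact hg (g.eq_zero_of_infinite_isRoot (Set.infinite_univ.mono (fun x _ => h x)))

theorem my_exists_prime_dvd_eval (g : Polynomial ℤ) (hg : 0 < g.natDegree) (S : Finset ℕ)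
    (hS : ∀ p ∈ S, p ≠ 0) :
    ∃ q : ℕ, q.Prime ∧ q ∉ S ∧ ∃ a : ℤ, (q : ℤ) ∣ g.eval a := by
  obtain ⟨x₀, hx₀⟩ := my_exists_eval_ne_zero g (fun h => by simp [h] at hg)
  set g₁ : Polynomial ℤ := g.comp (X + C x₀) with hg₁def
  have hg₁eval : ∀ t : ℤ, g₁.eval t = g.eval (t + x₀) := by intro t; simp [hg₁def]
  set c : ℤ := g₁.eval 0 with hc
  have hc0 : c ≠ 0 := by rw [hc, hg₁eval]; simpa using hx₀
  set M : ℤ := ∏ p ∈ S, (p : ℤ) with hM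
  have hM0 : M ≠ 0 := by
    rw [hM]
    exact Finset.prod_ne_zero_iff.mpr fun p hp h => (hS p hp) (by exact_mod_cast h)
  set F : Polynomial ℤ := g₁.comp (C (c * M) * X) with hF
  have hFeval : ∀ n : ℤ, F.eval n = g₁.eval (c * M * n) := by intro n; simp [hF]
  have hg₁deg : 0 < g₁.natDegree := by
    rw [hg₁def, Polynomial.natDegree_comp, Polynomial.natDegree_X_add_C, mul_one]
    exact hg
  have hFdeg : 0 < F.natDegree := by
    rw [hF, Polynomial.natDegree_comp]
    have h1 : (C (c * M) * X : Polynomial ℤ).natDegree = 1 := by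
      rw [Polynomial.natDegree_C_mul (mul_ne_zero hc0 hM0), Polynomial.natDegree_X]
    rw [h1, mul_one]
    exact hg₁deg
  have hbad : (Set.Finite ({n : ℤ | F.eval n = 0} ∪ {n : ℤ | F.eval n = c} ∪
      {n : ℤ | F.eval n = -c})) := by
    have h1 : F ≠ 0 := fun h => by simp [h] at hFdeg
    have h2 : F - C c ≠ 0 := fun h => by
      rw [sub_eq_zero.mp h] at hFdeg; simp at hFdeg
    have h3 : F + C c ≠ 0 := fun h => by
      have h4 : F = -C c := eq_neg_of_add_eq_zero_left h
      rw [h4] at hFdeg; simp at hFdeg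
    refine ((Polynomial.finite_setOf_isRoot h1).union
      ((Polynomial.finite_setOf_isRoot h2).union (Polynomial.finite_setOf_isRoot h3))).subset ?_
    rintro n ((hn | hn) | hn)
    · exact Or.inl hn
    · exact Or.inr (Or.inl (by simp only [Polynomial.IsRoot, Polynomial.eval_sub,
        Polynomial.eval_C, Set.mem_setOf_eq]; rw [hn]; ring))
    · exact Or.inr (Or.inr (by simp only [Polynomial.IsRoot, Polynomial.eval_add,
        Polynomial.eval_C, Set.mem_setOf_eq]; rw [hn]; ring))
  obtain ⟨n, hn⟩ := hbad.infinite_compl.nonempty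
  simp only [Set.mem_compl_iff, Set.mem_union, Set.mem_setOf_eq, not_or] at hn
  obtain ⟨⟨hn0, hnc⟩, hnc'⟩ := hn
  have hdvd : c * M * n - 0 ∣ g₁.eval (c * M * n) - g₁.eval 0 :=
    Polynomial.sub_dvd_eval_sub _ _ _
  rw [sub_zero, ← hc] at hdvd
  obtain ⟨t, ht⟩ := hdvd
  have hkey : g₁.eval (c * M * n) = c * (1 + M * n * t) := by
    have : g₁.eval (c * M * n) = c + c * M * n * t := by linarith [ht]
    rw [this]; ring
  set k : ℤ := 1 + M * n * t with hk
  have hk1 : k.natAbs ≠ 1 := by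
    intro h
    rcases Int.natAbs_eq_iff.mp h with h1 | h1
    · apply hnc; rw [hFeval, hkey, h1]; push_cast; ring
    · apply hnc'; rw [hFeval, hkey, h1]; push_cast; ring
  obtain ⟨q', hq'p, hq'd⟩ := Int.exists_prime_and_dvd hk1
  refine ⟨q'.natAbs, Int.prime_iff_natAbs_prime.mp hq'p, ?_, c * M * n + x₀, ?_⟩
  · intro hmem
    have hdvdM : (q'.natAbs : ℤ) ∣ M := by
      rw [hM]
      exact Finset.dvd_prod_of_mem (f := fun p : ℕ => (p : ℤ)) hmem
    have : (q'.natAbs : ℤ) ∣ 1 := by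
      have h1 : (q'.natAbs : ℤ) ∣ k := (Int.natAbs_dvd).mpr hq'd
      have h2 : (q'.natAbs : ℤ) ∣ M * n * t := Dvd.dvd.mul_right (Dvd.dvd.mul_right hdvdM n) t
      have := dvd_sub h1 h2
      simpa [hk] using this
    have habs := Int.eq_one_of_dvd_one (by positivity) this
    simp at habs
    exact hq'p.not_unit (Int.isUnit_iff_abs_eq.mpr habs)
  · rw [← hg₁eval, hkey]
    exact Dvd.dvd.mul_left ((Int.natAbs_dvd).mpr hq'd) c

theorem my_crt (S : Finset ℕ) (M : ℤ) (b : ℤ) (r : ℕ → ℤ)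
    (hcopM : ∀ p ∈ S, IsCoprime (p : ℤ) M)
    (hpair : ∀ p ∈ S, ∀ l ∈ S, p ≠ l → IsCoprime (p : ℤ) (l : ℤ)) :
    ∃ x : ℤ, M ∣ (x - b) ∧ ∀ p ∈ S, (p : ℤ) ∣ (x - r p) := by
  classical
  induction S using Finset.induction_on with
  | empty => exact ⟨b, by simp, by simp⟩
  | @insert p S hp ih =>
    obtain ⟨x₀, hx₀M, hx₀S⟩ := ih (fun l hl => hcopM l (Finset.mem_insert_of_mem hl))
      (fun a ha l hl hne => hpair a (Finset.mem_insert_of_mem ha) l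
        (Finset.mem_insert_of_mem hl) hne)
    set M' : ℤ := M * ∏ l ∈ S, (l : ℤ) with hM'
    have hcop : IsCoprime (p : ℤ) M' := by
      refine (hcopM p (Finset.mem_insert_self p S)).mul_right (IsCoprime.prod_right ?_)
      intro l hl
      exact hpair p (Finset.mem_insert_self p S) l (Finset.mem_insert_of_mem hl)
        (fun h => hp (h ▸ hl))
    obtain ⟨u, v, huv⟩ := hcop
    refine ⟨x₀ + (r p - x₀) * (v * M'), ?_, ?_⟩
    · have h1 : M ∣ M' := Dvd.intro _ rfl
      have : x₀ + (r p - x₀) * (v * M') - b = (x₀ - b) + (r p - x₀) * v * M' := by ring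
      rw [this]
      exact dvd_add hx₀M (Dvd.dvd.mul_left h1 _)
    · intro l hl
      rcases Finset.mem_insert.mp hl with rfl | hl
      · have : x₀ + (r l - x₀) * (v * M') - r l = (x₀ - r l) * (1 - v * M') := by ring
        rw [this]
        have h2 : 1 - v * M' = u * l := by linarith [huv]
        rw [h2]
        exact Dvd.dvd.mul_left (Dvd.intro_left u rfl) _
      · have hlM' : (l : ℤ) ∣ M' := (Finset.dvd_prod_of_mem (f := fun p : ℕ => (p : ℤ)) hl).mul_left M
        have : x₀ + (r p - x₀) * (v * M') - r l = (x₀ - r l) + (r p - x₀) * v * M' := by ring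
        rw [this]
        exact dvd_add (hx₀S l hl) (Dvd.dvd.mul_left hlM' _)

theorem stmt_5 (f : Polynomial ℤ)
    (hf : ¬ ∃ g : Polynomial ℂ, f.map (Int.castRingHom ℂ) = g ^ 2) :
    ∃ Pf : Finset ℕ, (∀ p ∈ Pf, p.Prime) ∧
      ∀ P : Finset ℕ, (∀ p ∈ P, p.Prime) →
        {x : ℤ | (∀ p ∈ P, p ∉ Pf → ¬ ((p : ℤ) ∣ f.eval x)) ∧
            ∃ p : ℕ, p.Prime ∧ p ∉ P ∧ Odd (padicValInt p (f.eval x))}.Infinite := by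
  classical
  have hf0 : f ≠ 0 := by rintro rfl; exact hf ⟨0, by simp⟩
  have hιinj : Function.Injective (algebraMap ℤ ℚ) := Int.cast_injective
  set fQ : Polynomial ℚ := f.map (algebraMap ℤ ℚ) with hfQ
  have hfQ0 : fQ ≠ 0 := fun h => hf0 (Polynomial.map_injective (algebraMap ℤ ℚ) hιinj (by rw [Polynomial.map_zero]; exact h))
  obtain ⟨s, h, hhsf, hfactor⟩ := my_sq_mul_squarefree fQ hfQ0
  have hh0 : h ≠ 0 := hhsf.ne_zero
  have hs0 : s ≠ 0 := fun hs => hfQ0 (by rw [hfactor, hs]; ring)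
  -- h is nonconstant
  have hmapℂ : f.map (Int.castRingHom ℂ) = fQ.map (algebraMap ℚ ℂ) := by
    rw [hfQ, Polynomial.map_map]
    exact congrArg (fun g => f.map g) (RingHom.ext_int _ _)
  have hhdeg : 0 < h.natDegree := by
    rcases Nat.eq_zero_or_pos h.natDegree with h0 | hpos
    · exfalso
      apply hf
      have hu : h = C (h.coeff 0) := Polynomial.eq_C_of_natDegree_eq_zero h0
      obtain ⟨w, hw⟩ := IsAlgClosed.exists_pow_nat_eq (k := ℂ)
        ((algebraMap ℚ ℂ) (h.coeff 0)) (n := 2) two_pos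
      refine ⟨s.map (algebraMap ℚ ℂ) * C w, ?_⟩
      rw [hmapℂ, hfactor, hu]
      rw [Polynomial.map_mul, Polynomial.map_pow, Polynomial.map_C, ← hw]
      rw [mul_pow, ← Polynomial.C_pow]
    · exact hpos
  -- integer normalizations
  obtain ⟨a, ha⟩ := IsLocalization.integerNormalization_map_to_map (nonZeroDivisors ℤ) h
  obtain ⟨b, hb⟩ := IsLocalization.integerNormalization_map_to_map (nonZeroDivisors ℤ) s
  set h₀ : Polynomial ℤ := IsLocalization.integerNormalization (nonZeroDivisors ℤ) h with hh₀
  set s₀ : Polynomial ℤ := IsLocalization.integerNormalization (nonZeroDivisors ℤ) s with hs₀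
  have ha0 : (a : ℤ) ≠ 0 := nonZeroDivisors.coe_ne_zero a
  have hb0 : (b : ℤ) ≠ 0 := nonZeroDivisors.coe_ne_zero b
  have hamap : h₀.map (algebraMap ℤ ℚ) = C ((a : ℤ) : ℚ) * h := by
    rw [ha, zsmul_eq_mul, Polynomial.C_eq_intCast]
  have hbmap : s₀.map (algebraMap ℤ ℚ) = C ((b : ℤ) : ℚ) * s := by
    rw [hb, zsmul_eq_mul, Polynomial.C_eq_intCast]
  have haQ0 : ((a : ℤ) : ℚ) ≠ 0 := Int.cast_ne_zero.mpr ha0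
  have hbQ0 : ((b : ℤ) : ℚ) ≠ 0 := Int.cast_ne_zero.mpr hb0
  -- main integer identity
  set A : ℤ := (b : ℤ) ^ 2 * (a : ℤ) with hA
  have hA0 : A ≠ 0 := mul_ne_zero (pow_ne_zero 2 hb0) ha0
  have hintid : C A * f = s₀ ^ 2 * h₀ := by
    apply Polynomial.map_injective (algebraMap ℤ ℚ) hιinj
    simp only [Polynomial.map_mul, Polynomial.map_C, Polynomial.map_pow]
    rw [hamap, hbmap, ← hfQ, hfactor]
    simp only [eq_intCast, hA]
    push_cast
    rw [Polynomial.C_mul, Polynomial.C_pow]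
    ring
  -- h₀ has positive degree, s₀ nonzero
  have hh₀deg : 0 < h₀.natDegree := by
    have h1 : (h₀.map (algebraMap ℤ ℚ)).natDegree = h.natDegree := by
      rw [hamap, Polynomial.natDegree_C_mul haQ0]
    rw [Polynomial.natDegree_map_eq_of_injective hιinj] at h1
    omega
  have hh₀0 : h₀ ≠ 0 := fun h => by rw [h] at hh₀deg; simp at hh₀deg
  have hs₀0 : s₀ ≠ 0 := fun hz => by
    rw [hz, Polynomial.map_zero] at hbmap
    exact hs0 (by
      have := hbmap.symm
      rcases mul_eq_zero.mp this with h1 | h1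
      · exact absurd (Polynomial.C_eq_zero.mp h1) hbQ0
      · exact h1)
  -- Bezout over ℚ, cleared to ℤ
  have hsep : IsCoprime h (derivative h) := PerfectField.separable_iff_squarefree.mpr hhsf
  obtain ⟨u, v, huv⟩ := hsep
  obtain ⟨cu, hcu⟩ := IsLocalization.integerNormalization_map_to_map (nonZeroDivisors ℤ) u
  obtain ⟨cv, hcv⟩ := IsLocalization.integerNormalization_map_to_map (nonZeroDivisors ℤ) v
  set U : Polynomial ℤ := IsLocalization.integerNormalization (nonZeroDivisors ℤ) u with hU
  set V : Polynomial ℤ := IsLocalization.integerNormalization (nonZeroDivisors ℤ) v with hV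
  have hcu0 : (cu : ℤ) ≠ 0 := nonZeroDivisors.coe_ne_zero cu
  have hcv0 : (cv : ℤ) ≠ 0 := nonZeroDivisors.coe_ne_zero cv
  have hUmap : U.map (algebraMap ℤ ℚ) = C ((cu : ℤ) : ℚ) * u := by
    rw [hcu, zsmul_eq_mul, Polynomial.C_eq_intCast]
  have hVmap : V.map (algebraMap ℤ ℚ) = C ((cv : ℤ) : ℚ) * v := by
    rw [hcv, zsmul_eq_mul, Polynomial.C_eq_intCast]
  set N : ℤ := (cu : ℤ) * (cv : ℤ) * (a : ℤ) with hN
  have hN0 : N ≠ 0 := mul_ne_zero (mul_ne_zero hcu0 hcv0) ha0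
  have hNid : C (cv : ℤ) * U * h₀ + C (cu : ℤ) * V * (derivative h₀) = C N := by
    apply Polynomial.map_injective (algebraMap ℤ ℚ) hιinj
    have hder : (derivative h₀).map (algebraMap ℤ ℚ) = C ((a : ℤ) : ℚ) * derivative h := by
      rw [← Polynomial.derivative_map, hamap, Polynomial.derivative_C_mul]
    simp only [Polynomial.map_add, Polynomial.map_mul, Polynomial.map_C]
    rw [hUmap, hVmap, hamap, hder]
    simp only [eq_intCast, hN]
    push_cast
    rw [Polynomial.C_mul, Polynomial.C_mul]
    linear_combination (C ((cu : ℤ) : ℚ) * C ((cv : ℤ) : ℚ) * C ((a : ℤ) : ℚ)) * huv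
  have hevalN : ∀ y : ℤ, (cv : ℤ) * U.eval y * h₀.eval y
      + (cu : ℤ) * V.eval y * (derivative h₀).eval y = N := by
    intro y
    have := congrArg (Polynomial.eval y) hNid
    simpa using this
  -- choose reference point and Pf
  obtain ⟨n₀, hn₀⟩ := my_exists_eval_ne_zero f hf0
  refine ⟨(f.eval n₀).natAbs.primeFactors, fun p hp => Nat.prime_of_mem_primeFactors hp, ?_⟩
  intro P hP
  set Pf : Finset ℕ := (f.eval n₀).natAbs.primeFactors with hPf
  set T : Finset ℕ := P \ Pf with hT
  -- choose prime q
  set S₀ : Finset ℕ := P ∪ (A * N).natAbs.primeFactors with hS₀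
  have hS₀ne : ∀ p ∈ S₀, p ≠ 0 := by
    intro p hp
    rcases Finset.mem_union.mp hp with h1 | h1
    · exact (hP p h1).ne_zero
    · exact (Nat.prime_of_mem_primeFactors h1).ne_zero
  obtain ⟨q, hqprime, hqS₀, a₁, hqa₁⟩ := my_exists_prime_dvd_eval h₀ hh₀deg S₀ hS₀ne
  haveI : Fact q.Prime := ⟨hqprime⟩
  have hqD : ¬ (q : ℤ) ∣ A * N := by
    intro hd
    apply hqS₀
    refine Finset.mem_union_right _ (Nat.mem_primeFactors.mpr ⟨hqprime, ?_, ?_⟩)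
    · have := Int.natAbs_dvd_natAbs.mpr hd
      simpa using this
    · simpa using mul_ne_zero hA0 hN0
  have hqA : ¬ (q : ℤ) ∣ A := fun hd => hqD (hd.mul_right N)
  have hqN : ¬ (q : ℤ) ∣ N := fun hd => hqD (hd.mul_left A)
  have hqP : q ∉ P := fun hq => hqS₀ (Finset.mem_union_left _ hq)
  -- q does not divide h₀'(a₁)
  have hqder : ¬ (q : ℤ) ∣ (derivative h₀).eval a₁ := by
    intro hd
    apply hqN
    rw [← hevalN a₁]
    exact dvd_add ((hqa₁.mul_left _)) (hd.mul_left _)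
  -- find b₁ with v_q(h₀(b₁)) = 1
  obtain ⟨b₁, hb₁d, hb₁nd⟩ : ∃ b₁ : ℤ, (q : ℤ) ∣ h₀.eval b₁ ∧ ¬ (q : ℤ) ^ 2 ∣ h₀.eval b₁ := by
    by_cases hcase : (q : ℤ) ^ 2 ∣ h₀.eval a₁
    · obtain ⟨k, hk⟩ := h₀.binomExpansion a₁ (q : ℤ)
      refine ⟨a₁ + q, ?_, ?_⟩
      · rw [hk]
        exact dvd_add (dvd_add hqa₁ (dvd_mul_left _ _))
          (by exact Dvd.dvd.mul_left (dvd_pow_self _ two_ne_zero) k)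
      · intro hd
        rw [hk] at hd
        have h1 : (q : ℤ) ^ 2 ∣ (derivative h₀).eval a₁ * q := by
          have heq : (derivative h₀).eval a₁ * q = (h₀.eval a₁ + (derivative h₀).eval a₁ * q
              + k * q ^ 2) - h₀.eval a₁ - k * q ^ 2 := by ring
          rw [heq]
          exact dvd_sub (dvd_sub hd hcase) (dvd_mul_left _ k)
        have hq0 : (q : ℤ) ≠ 0 := by exact_mod_cast hqprime.ne_zero
        rw [sq] at h1
        have h2 : (q : ℤ) ∣ (derivative h₀).eval a₁ :=
          (mul_dvd_mul_iff_right hq0).mp (by rwa [mul_comm] at h1)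
        exact hqder h2
    · exact ⟨a₁, hqa₁, hcase⟩
  -- CRT
  have hcrt := my_crt T ((q : ℤ) ^ 2) b₁ (fun _ => n₀) ?_ ?_
  rotate_left
  · intro p hp
    have hpP : p ∈ P := (Finset.mem_sdiff.mp hp).1
    have hpprime := hP p hpP
    have hpq : p ≠ q := fun h => hqP (h ▸ hpP)
    exact (Nat.isCoprime_iff_coprime.mpr ((Nat.coprime_primes hpprime hqprime).mpr hpq)).pow_right
  · intro p hp l hl hne
    exact Nat.isCoprime_iff_coprime.mpr ((Nat.coprime_primes (hP p (Finset.mem_sdiff.mp hp).1)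
      (hP l (Finset.mem_sdiff.mp hl).1)).mpr hne)
  obtain ⟨x₀, hx₀q, hx₀T⟩ := hcrt
  -- the arithmetic progression
  set L : ℤ := (q : ℤ) ^ 2 * ∏ p ∈ T, (p : ℤ) with hL
  have hL0 : L ≠ 0 := by
    apply mul_ne_zero (pow_ne_zero 2 (by exact_mod_cast hqprime.ne_zero))
    exact Finset.prod_ne_zero_iff.mpr fun p hp hz =>
      (hP p (Finset.mem_sdiff.mp hp).1).ne_zero (by exact_mod_cast hz)
  have hprog : Set.Infinite {x : ℤ | L ∣ x - x₀} := by
    apply Set.infinite_of_injective_forall_mem (f := fun k : ℤ => x₀ + k * L)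
    · intro k₁ k₂ hk
      simp only [add_right_inj] at hk
      exact mul_right_cancel₀ hL0 hk
    · intro k
      simp only [Set.mem_setOf_eq, add_sub_cancel_left]
      exact dvd_mul_left L k
  have hGinf : Set.Infinite ({x : ℤ | L ∣ x - x₀} \
      ({x : ℤ | f.eval x = 0} ∪ {x : ℤ | s₀.eval x = 0})) :=
    hprog.diff ((Polynomial.finite_setOf_isRoot hf0).union (Polynomial.finite_setOf_isRoot hs₀0))
  apply hGinf.mono
  rintro x ⟨hxL, hxroots⟩
  simp only [Set.mem_union, Set.mem_setOf_eq, not_or] at hxroots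
  obtain ⟨hfx0, hsx0⟩ := hxroots
  simp only [Set.mem_setOf_eq] at hxL ⊢
  constructor
  · -- part (a)
    intro p hpP hpPf
    have hpT : p ∈ T := Finset.mem_sdiff.mpr ⟨hpP, hpPf⟩
    intro hpdvd
    have hpdx : (p : ℤ) ∣ x - n₀ := by
      have h1 : (p : ℤ) ∣ x - x₀ :=
        dvd_trans ((Finset.dvd_prod_of_mem (f := fun p : ℕ => (p : ℤ)) hpT).mul_left _) hxL
      have h2 := hx₀T p hpT
      have : x - n₀ = (x - x₀) + (x₀ - n₀) := by ring
      rw [this]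
      exact dvd_add h1 h2
    have hpfn₀ : (p : ℤ) ∣ f.eval n₀ := by
      have h3 : (p : ℤ) ∣ f.eval x - f.eval n₀ := dvd_trans hpdx (Polynomial.sub_dvd_eval_sub x n₀ f)
      have : f.eval n₀ = f.eval x - (f.eval x - f.eval n₀) := by ring
      rw [this]
      exact dvd_sub hpdvd h3
    apply hpPf
    rw [hPf]
    refine Nat.mem_primeFactors.mpr ⟨hP p hpP, ?_, by simpa using hn₀⟩
    have := Int.natAbs_dvd_natAbs.mpr hpfn₀
    simpa using this
  · -- part (b)
    refine ⟨q, hqprime, hqP, ?_⟩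
    have hq2x : (q : ℤ) ^ 2 ∣ x - b₁ := by
      have h1 : (q : ℤ) ^ 2 ∣ x - x₀ := dvd_trans (dvd_mul_right _ _) hxL
      have : x - b₁ = (x - x₀) + (x₀ - b₁) := by ring
      rw [this]
      exact dvd_add h1 hx₀q
    have hq2diff : (q : ℤ) ^ 2 ∣ h₀.eval x - h₀.eval b₁ :=
      dvd_trans hq2x (Polynomial.sub_dvd_eval_sub x b₁ h₀)
    have hqhx : (q : ℤ) ∣ h₀.eval x := by
      have : h₀.eval x = (h₀.eval x - h₀.eval b₁) + h₀.eval b₁ := by ring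
      rw [this]
      exact dvd_add (dvd_trans (dvd_pow_self _ two_ne_zero) hq2diff) hb₁d
    have hq2hx : ¬ (q : ℤ) ^ 2 ∣ h₀.eval x := by
      intro hd
      apply hb₁nd
      have : h₀.eval b₁ = h₀.eval x - (h₀.eval x - h₀.eval b₁) := by ring
      rw [this]
      exact dvd_sub hd hq2diff
    have hhx0 : h₀.eval x ≠ 0 := fun hz => hq2hx (by rw [hz]; exact dvd_zero _)
    -- valuation of h₀(x) is 1
    have hval1 : padicValInt q (h₀.eval x) = 1 := by
      have h1 : 1 ≤ padicValInt q (h₀.eval x) := by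
        rcases (padicValInt_dvd_iff 1 (h₀.eval x)).mp (by simpa using hqhx) with hz | hle
        · exact absurd hz hhx0
        · exact hle
      have h2 : ¬ 2 ≤ padicValInt q (h₀.eval x) := fun hle =>
        hq2hx ((padicValInt_dvd_iff 2 (h₀.eval x)).mpr (Or.inr hle))
      omega
    -- combine
    have hevalid : A * f.eval x = (s₀.eval x) ^ 2 * h₀.eval x := by
      have := congrArg (Polynomial.eval x) hintid
      simpa using this
    have hv1 : padicValInt q (A * f.eval x) = padicValInt q (f.eval x) := by
      rw [padicValInt.mul hA0 hfx0, padicValInt.eq_zero_of_not_dvd hqA, zero_add]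
    have hv2 : padicValInt q ((s₀.eval x) ^ 2 * h₀.eval x)
        = 2 * padicValInt q (s₀.eval x) + 1 := by
      rw [padicValInt.mul (pow_ne_zero 2 hsx0) hhx0, hval1, sq,
        padicValInt.mul hsx0 hsx0]
      ring
    have hfinal : padicValInt q (f.eval x) = 2 * padicValInt q (s₀.eval x) + 1 := by
      rw [← hv1, hevalid, hv2]
    exact ⟨padicValInt q (s₀.eval x), by omega⟩
end
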